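/- arXiv:2509.24279 — 4 statements merged into one kernel-verified Lean document; each statement's English description precedes it below -/
import Mathlib

section
/- For x in the unit simplex S_n and d > 0, the intersection S_n ∩ S(x,d) equals the simplex ball S(x̂, d̂), where d̂ = (1/n)·∑_{i=1}^n min{d, x_i} and x̂_i = max{x_i, d} + d̂ − d for each i. -/
open InnerProductSpace Finset

noncomputable section

abbrev Euc (n : ℕ) := EuclideanSpace ℝ (Fin n)

/-- The all-ones vector. -/
def ones (n : ℕ) : Euc n := WithLp.toLp 2 (fun _ => 1)

/-- The unit simplex. -/
def unitSimplex (n : ℕ) : Set (Euc n) := {x | (∀ i, 0 ≤ x i) ∧ ∑ i, x i = 1}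

/-- The simplex ball. -/
def simplexBall (n : ℕ) (x : Euc n) (d : ℝ) : Set (Euc n) :=
  {y | ∃ l ∈ unitSimplex n, y = (x - d • ones n) + ((n : ℝ) * d) • l}

lemma simplexBall_eq (n : ℕ) (hn : 0 < n) (x : Euc n) (d : ℝ) (hd : 0 < d) :
    simplexBall n x d = {y | (∀ i, x i - d ≤ y i) ∧ ∑ i, y i = ∑ i, x i} := by
  have hnd : (0:ℝ) < (n : ℝ) * d := by positivity
  ext y
  simp only [simplexBall, unitSimplex, Set.mem_setOf_eq]
  constructor
  · rintro ⟨l, ⟨hl0, hl1⟩, rfl⟩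
    have happ : ∀ i, (x - d • ones n + ((n : ℝ) * d) • l) i
        = x i - d + (n : ℝ) * d * l i := by
      intro i
      simp [ones, PiLp.add_apply, PiLp.sub_apply, PiLp.smul_apply, smul_eq_mul]
    constructor
    · intro i
      rw [happ i]
      nlinarith [hl0 i]
    · rw [Finset.sum_congr rfl fun i _ => happ i]
      rw [Finset.sum_add_distrib, Finset.sum_sub_distrib, ← Finset.mul_sum, hl1]
      simp
  · rintro ⟨h1, h2⟩
    refine ⟨WithLp.toLp 2 (fun i => (y i - x i + d) / ((n : ℝ) * d)), ⟨?_, ?_⟩, ?_⟩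
    · intro i
      have h := h1 i
      have h0 : 0 ≤ y i - x i + d := by linarith
      simp only [PiLp.toLp_apply]
      positivity
    · simp only [PiLp.toLp_apply]
      rw [← Finset.sum_div, Finset.sum_add_distrib, Finset.sum_sub_distrib, h2]
      field_simp
      simp
    · ext i
      simp only [ones, PiLp.add_apply, PiLp.sub_apply, PiLp.smul_apply, smul_eq_mul, PiLp.toLp_apply]
      field_simp
      ring

theorem unitSimplex_inter_simplexBall (n : ℕ) (x : Euc n) (hx : x ∈ unitSimplex n)
    (d : ℝ) (hd : 0 < d) :
    unitSimplex n ∩ simplexBall n x d =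
      simplexBall n (WithLp.toLp 2 (fun i => max (x i) d + (∑ j, min d (x j)) / n - d))
        ((∑ j, min d (x j)) / n) := by
  obtain ⟨hx0, hx1⟩ := hx
  have hn : 0 < n := by
    rcases Nat.eq_zero_or_pos n with h | h
    · exfalso; subst h; simpa using hx1
    · exact h
  have hnR : (0:ℝ) < (n : ℝ) := by exact_mod_cast hn
  -- sum of mins is positive
  have hj : ∃ j, 0 < x j := by
    by_contra h
    push_neg at h
    have : ∑ i, x i ≤ 0 := Finset.sum_nonpos fun i _ => h i
    linarith [hx1 ▸ this]
  obtain ⟨j, hj⟩ := hj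
  have hS : 0 < ∑ j, min d (x j) := by
    apply Finset.sum_pos' (fun i _ => le_min hd.le (hx0 i)) ⟨j, Finset.mem_univ j, lt_min hd hj⟩
  set S := ∑ j, min d (x j) with hSdef
  have hdhat : 0 < S / n := by positivity
  -- sum identity: ∑ max + ∑ min = ∑ x + n*d
  have hmaxmin : ∑ i, max (x i) d = (1 : ℝ) + n * d - S := by
    have : ∑ i, (max (x i) d + min d (x i)) = ∑ i, (x i + d) := by
      apply Finset.sum_congr rfl
      intro i _
      rcases le_total (x i) d with h | h
      · rw [max_eq_right h, min_eq_right h]; ring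
      · rw [max_eq_left h, min_eq_left h]
    rw [Finset.sum_add_distrib, Finset.sum_add_distrib, hx1] at this
    simp only [Finset.sum_const, Finset.card_univ, Fintype.card_fin, nsmul_eq_mul,
      mul_one] at this
    rw [hSdef]
    linarith
  rw [simplexBall_eq n hn x d hd, simplexBall_eq n hn _ _ hdhat]
  ext y
  simp only [unitSimplex, Set.mem_inter_iff, Set.mem_setOf_eq]
  have hsumhat : ∑ i, (max (x i) d + S / n - d) = 1 := by
    rw [Finset.sum_sub_distrib, Finset.sum_add_distrib, hmaxmin]
    simp only [Finset.sum_const, Finset.card_univ, Fintype.card_fin, nsmul_eq_mul]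
    field_simp
    ring
  constructor
  · rintro ⟨⟨hy0, hy1⟩, hy2, _⟩
    refine ⟨fun i => ?_, by rw [hsumhat, hy1]⟩
    have h1 := hy0 i
    have h2 := hy2 i
    rcases le_total (x i) d with h | h
    · rw [max_eq_right h]; linarith
    · rw [max_eq_left h]; linarith
  · rintro ⟨hy1, hy2⟩
    rw [hsumhat] at hy2
    have key : ∀ i, 0 ≤ y i ∧ x i - d ≤ y i := by
      intro i
      have := hy1 i
      rcases le_total (x i) d with h | h
      · rw [max_eq_right h] at this
        constructor <;> linarith
      · rw [max_eq_left h] at this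
        constructor <;> linarith
    exact ⟨⟨fun i => (key i).1, hy2⟩, fun i => (key i).2, by rw [hy2, hx1]⟩
end
end

section
/- Let x ∈ S_n and d > 0. For any y ∈ S_n with ‖x − y‖₂ ≤ d, it holds that y ∈ S(x,d). -/
open InnerProductSpace Finset

noncomputable section

theorem mem_simplexBall_of_dist_le (n : ℕ) (x : Euc n) (hx : x ∈ unitSimplex n)
    (d : ℝ) (hd : 0 < d) (y : Euc n) (hy : y ∈ unitSimplex n)
    (hdist : ‖x - y‖ ≤ d) : y ∈ simplexBall n x d := by
  have hn : 0 < n := by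
    rcases Nat.eq_zero_or_pos n with h | h
    · exfalso; have := hx.2; subst h; simp at this
    · exact h
  have hnd : (0:ℝ) < n * d := by positivity
  refine ⟨(1 / ((n:ℝ)*d)) • (y - x + d • ones n), ⟨?_, ?_⟩, ?_⟩
  · intro i
    have hcoord : |x i - y i| ≤ ‖x - y‖ := by
      have := EuclideanSpace.norm_eq (𝕜 := ℝ) (x - y)
      calc |x i - y i| = Real.sqrt (|x i - y i|^2) := by
            rw [Real.sqrt_sq_eq_abs, abs_abs]
        _ ≤ ‖x - y‖ := by
            rw [this]
            apply Real.sqrt_le_sqrt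
            have : |x i - y i| = ‖(x - y) i‖ := by simp [Euc]
            rw [this]
            exact Finset.single_le_sum (f := fun i => ‖(x-y) i‖^2)
              (fun j _ => by positivity) (Finset.mem_univ i)
    have h1 : x i - y i ≤ d := (abs_le.mp (hcoord.trans hdist)).2
    have : (0:ℝ) ≤ y i - x i + d := by linarith
    have : ((1 / ((n:ℝ)*d)) • (y - x + d • ones n)) i
        = (1 / ((n:ℝ)*d)) * (y i - x i + d) := by
      simp [Euc, ones, mul_comm]
      ring
    rw [this]
    positivity
  · have hsum : ∑ i, (y i - x i + d) = (n:ℝ) * d := by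
      rw [Finset.sum_add_distrib, Finset.sum_sub_distrib, hy.2, hx.2]
      simp [mul_comm]
    have : ∑ i, ((1 / ((n:ℝ)*d)) • (y - x + d • ones n)) i
        = (1 / ((n:ℝ)*d)) * ∑ i, (y i - x i + d) := by
      rw [Finset.mul_sum]
      apply Finset.sum_congr rfl
      intro i _
      simp [Euc, ones]
      try ring
    rw [this, hsum]
    field_simp
  · ext i
    simp only [Euc, PiLp.add_apply, PiLp.sub_apply, PiLp.smul_apply, ones, smul_eq_mul]
    field_simp
    try ring
end
end

section
/- For x ∈ S_n and d > 0, the Euclidean ball B(x,d) intersected with S_n is contained in S(x,d), and S(x,d) is contained in the Euclidean ball B(x, n·d). Consequently, for any c ∈ ℝ^n, any minimizer y* of ⟨c,·⟩ over S(x,d) ∩ S_n satisfies ⟨c, y⟩ ≥ ⟨c, y*⟩ for all y ∈ B(x,d) ∩ S_n, and ‖x − y*‖₂ ≤ n·d. -/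
open InnerProductSpace Finset

noncomputable section

theorem slmo_is_lloo (n : ℕ) (x : Euc n) (hx : x ∈ unitSimplex n) (d : ℝ) (hd : 0 < d) :
    (Metric.closedBall x d ∩ unitSimplex n ⊆ simplexBall n x d) ∧
    (simplexBall n x d ⊆ Metric.closedBall x ((n : ℝ) * d)) ∧
    ∀ c : Euc n, ∀ ystar ∈ simplexBall n x d ∩ unitSimplex n,
      (∀ z ∈ simplexBall n x d ∩ unitSimplex n, ⟪c, ystar⟫_ℝ ≤ ⟪c, z⟫_ℝ) →
      (∀ y ∈ Metric.closedBall x d ∩ unitSimplex n, ⟪c, ystar⟫_ℝ ≤ ⟪c, y⟫_ℝ) ∧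
        ‖x - ystar‖ ≤ (n : ℝ) * d := by
  have hn : 0 < n := by
    rcases Nat.eq_zero_or_pos n with h | h
    · exfalso; subst h; simpa using hx.2
    · exact h
  have hn1 : (1:ℝ) ≤ (n:ℝ) := by exact_mod_cast hn
  have hnd : (0:ℝ) < (n:ℝ) * d := by positivity
  have h1 : Metric.closedBall x d ∩ unitSimplex n ⊆ simplexBall n x d := by
    rintro y ⟨hyb, hy0, hy1⟩
    refine ⟨((n:ℝ)*d)⁻¹ • (y - x + d • ones n), ⟨?_, ?_⟩, ?_⟩
    · intro i
      have hsq : (x i - y i)^2 ≤ d^2 := by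
        have h1' : (x i - y i)^2 ≤ ∑ j, (x j - y j)^2 :=
          Finset.single_le_sum (f := fun j => (x j - y j)^2)
            (fun j _ => sq_nonneg _) (Finset.mem_univ i)
        have hdist : Real.sqrt (∑ j, (x j - y j)^2) ≤ d := by
          have := Metric.mem_closedBall.mp hyb
          rw [dist_eq_norm, EuclideanSpace.norm_eq] at this
          have heq : ∑ j, ‖(y - x) j‖^2 = ∑ j, (x j - y j)^2 := by
            apply Finset.sum_congr rfl
            intro j _
            simp [PiLp.sub_apply, Real.norm_eq_abs, sq_abs]
            ring
          rw [heq] at this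
          exact this
        have hS : 0 ≤ ∑ j, (x j - y j)^2 := Finset.sum_nonneg fun j _ => sq_nonneg _
        have := Real.sq_sqrt hS
        nlinarith [Real.sqrt_nonneg (∑ j, (x j - y j)^2)]
      have hcoord : 0 ≤ y i - x i + d := by nlinarith [sq_nonneg (x i - y i + d)]
      have : (((n:ℝ)*d)⁻¹ • (y - x + d • ones n)) i
          = ((n:ℝ)*d)⁻¹ * (y i - x i + d) := by
        simp [PiLp.smul_apply, PiLp.add_apply, PiLp.sub_apply, ones, smul_eq_mul]
        ring
      rw [this]
      positivity
    · have : ∀ i, (((n:ℝ)*d)⁻¹ • (y - x + d • ones n)) i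
          = ((n:ℝ)*d)⁻¹ * (y i - x i + d) := by
        intro i
        simp [PiLp.smul_apply, PiLp.add_apply, PiLp.sub_apply, ones, smul_eq_mul]
        ring
      rw [Finset.sum_congr rfl (fun i _ => this i), ← Finset.mul_sum]
      have hsum : ∑ i, (y i - x i + d) = (n:ℝ)*d := by
        rw [Finset.sum_add_distrib, Finset.sum_sub_distrib, hy1, hx.2]
        simp [mul_comm]
      rw [hsum]
      field_simp
    · rw [smul_smul, mul_inv_cancel₀ hnd.ne', one_smul]
      abel
  have h2 : simplexBall n x d ⊆ Metric.closedBall x ((n : ℝ) * d) := by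
    rintro y ⟨l, ⟨hl0, hl1⟩, rfl⟩
    have hl_le : ∀ i, l i ≤ 1 := by
      intro i
      calc l i ≤ ∑ j, l j :=
            Finset.single_le_sum (fun j _ => hl0 j) (Finset.mem_univ i)
        _ = 1 := hl1
    have hsum_sq : ∑ i, (l i)^2 ≤ 1 := by
      calc ∑ i, (l i)^2 ≤ ∑ i, l i :=
            Finset.sum_le_sum (fun i _ => by nlinarith [hl0 i, hl_le i])
        _ = 1 := hl1
    have key : ∑ i, ((n:ℝ)*d*l i - d)^2 ≤ ((n:ℝ)*d)^2 := by
      have expand : ∀ i ∈ Finset.univ, ((n:ℝ)*d*l i - d)^2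
          = ((n:ℝ)*d)^2 * (l i)^2 - (2*(n:ℝ)*d^2) * l i + d^2 := fun i _ => by ring
      rw [Finset.sum_congr rfl expand, Finset.sum_add_distrib, Finset.sum_sub_distrib,
        ← Finset.mul_sum, ← Finset.mul_sum, hl1, Finset.sum_const, Finset.card_univ,
        Fintype.card_fin, nsmul_eq_mul]
      nlinarith [mul_le_mul_of_nonneg_left hsum_sq (sq_nonneg ((n:ℝ)*d)), sq_nonneg d]
    rw [Metric.mem_closedBall, dist_eq_norm]
    have heq : (x - d • ones n) + ((n:ℝ)*d) • l - x = ((n:ℝ)*d) • l - d • ones n := by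
      abel
    rw [heq, EuclideanSpace.norm_eq]
    have hcoord : ∑ i, ‖(((n:ℝ)*d) • l - d • ones n) i‖^2
        = ∑ i, ((n:ℝ)*d*l i - d)^2 := by
      apply Finset.sum_congr rfl
      intro i _
      simp [PiLp.sub_apply, PiLp.smul_apply, ones, smul_eq_mul, Real.norm_eq_abs, sq_abs]
    rw [hcoord]
    calc Real.sqrt (∑ i, ((n:ℝ)*d*l i - d)^2) ≤ Real.sqrt (((n:ℝ)*d)^2) :=
          Real.sqrt_le_sqrt key
      _ = (n:ℝ)*d := Real.sqrt_sq hnd.le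
  refine ⟨h1, h2, ?_⟩
  rintro c ystar ⟨hyS, hyU⟩ hmin
  constructor
  · intro y hy
    exact hmin y ⟨h1 hy, hy.2⟩
  · have := Metric.mem_closedBall.mp (h2 hyS)
    rw [dist_eq_norm] at this
    rwa [← norm_neg, neg_sub] at this
end
end

section
/- Let P = Conv{v₁,…,v_N} ⊆ ℝ^n, x ∈ P, d > 0, and let λ, λ′ ∈ S_N both satisfy x = ∑_i λ_i v_i = ∑_i λ′_i v_i. Then for any μ ∈ S(λ, d) there exists μ′ ∈ S(λ′, d) with ∑_i μ_i v_i = ∑_i μ′_i v_i. Consequently, the generalized simplex ball S_P(x,d) := {∑_i μ_i v_i : μ ∈ S(λ_x, d)} is independent of the choice of convex representation λ_x of x. -/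
open InnerProductSpace Finset

noncomputable section

lemma aux_transfer (n N : ℕ) (v : Fin N → Euc n) (x : Euc n) (d : ℝ)
    (l l' : Euc N) (hx : x = ∑ i, l i • v i) (hx' : x = ∑ i, l' i • v i) :
    ∀ m ∈ simplexBall N l d, ∃ m' ∈ simplexBall N l' d,
      ∑ i, m i • v i = ∑ i, m' i • v i := by
  rintro m ⟨ν, hν, rfl⟩
  refine ⟨_, ⟨ν, hν, rfl⟩, ?_⟩
  have : ∀ (w : Euc N) i, ((w - d • ones N) + ((N : ℝ) * d) • ν) i
      = w i - d + ((N : ℝ) * d) * ν i := by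
    intro w i
    simp [ones, Pi.add_apply, Pi.sub_apply]
  simp only [this, sub_smul, add_smul, Finset.sum_add_distrib, Finset.sum_sub_distrib]
  rw [← hx, ← hx']

theorem generalized_simplexBall_well_defined (n N : ℕ) (v : Fin N → Euc n)
    (x : Euc n) (d : ℝ) (hd : 0 < d)
    (l l' : Euc N) (hl : l ∈ unitSimplex N) (hl' : l' ∈ unitSimplex N)
    (hx : x = ∑ i, l i • v i) (hx' : x = ∑ i, l' i • v i) :
    (∀ m ∈ simplexBall N l d, ∃ m' ∈ simplexBall N l' d,
        ∑ i, m i • v i = ∑ i, m' i • v i) ∧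
    {z : Euc n | ∃ m ∈ simplexBall N l d, z = ∑ i, m i • v i} =
      {z : Euc n | ∃ m' ∈ simplexBall N l' d, z = ∑ i, m' i • v i} := by
  refine ⟨aux_transfer n N v x d l l' hx hx', Set.Subset.antisymm ?_ ?_⟩
  · rintro z ⟨m, hm, rfl⟩
    obtain ⟨m', hm', h⟩ := aux_transfer n N v x d l l' hx hx' m hm
    exact ⟨m', hm', h⟩
  · rintro z ⟨m, hm, rfl⟩
    obtain ⟨m', hm', h⟩ := aux_transfer n N v x d l' l hx' hx m hm
    exact ⟨m', hm', h⟩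
end
end
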